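/- Let G be a finite simple graph and let v be a non-isolated vertex of G with degree d(v). Then λ(G) ≤ sqrt(λ(G − v)² + 2·d(v) − 1), where λ denotes spectral radius of the adjacency matrix. -/

import Mathlib

open Matrix
set_option linter.unusedSectionVars false

/-- The adjacency matrix of a simple graph, viewed over `ℝ`, is Hermitian. -/
lemma adjHerm {V : Type*} [Fintype V] (G : SimpleGraph V) [DecidableRel G.Adj] :
    (G.adjMatrix ℝ).IsHermitian := by
  rw [Matrix.IsHermitian, Matrix.conjTranspose_eq_transpose_of_trivial]
  exact G.isSymm_adjMatrix

/-- The spectral radius of a finite simple graph: the maximum of the absolute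
values of the eigenvalues of its adjacency matrix. -/
noncomputable def specRad {V : Type*} [Fintype V] [DecidableEq V]
    (G : SimpleGraph V) [DecidableRel G.Adj] : ℝ :=
  ⨆ i, |(adjHerm G).eigenvalues i|

instance {V : Type*} (G : SimpleGraph V) [DecidableRel G.Adj] (s : Set V)
    [DecidablePred (· ∈ s)] : DecidableRel (G.induce s).Adj :=
  fun a b => ‹DecidableRel G.Adj› a b

/-- The graph `G - v` obtained from `G` by deleting the vertex `v`
and all edges incident to it. -/
abbrev deleteVertex {V : Type*} [DecidableEq V] (G : SimpleGraph V) (v : V) :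
    SimpleGraph {u // u ≠ v} :=
  G.induce {u | u ≠ v}

namespace SpecDelAux

variable {n : Type*} [Fintype n] [DecidableEq n]

lemma unitary_dot {M : Matrix n n ℝ} (hM : M ∈ Matrix.unitaryGroup n ℝ) (z w : n → ℝ) :
    (M *ᵥ z) ⬝ᵥ (M *ᵥ w) = z ⬝ᵥ w := by
  rw [Matrix.dotProduct_mulVec, ← Matrix.mulVec_transpose, Matrix.mulVec_mulVec]
  have h1 : Mᵀ * M = 1 := by
    have h2 := (Matrix.mem_unitaryGroup_iff').mp hM
    rwa [Matrix.star_eq_conjTranspose, Matrix.conjTranspose_eq_transpose_of_trivial] at h2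
  rw [h1, Matrix.one_mulVec]

variable {H : Matrix n n ℝ} (hH : H.IsHermitian)

/-- coordinates w.r.t. eigenbasis -/
noncomputable def coords (z : n → ℝ) : n → ℝ :=
  (star (hH.eigenvectorUnitary : Matrix n n ℝ)) *ᵥ z

lemma star_unitary_mem :
    star (hH.eigenvectorUnitary : Matrix n n ℝ) ∈ Matrix.unitaryGroup n ℝ := by
  rw [Matrix.mem_unitaryGroup_iff, star_star]
  exact (Matrix.mem_unitaryGroup_iff').mp hH.eigenvectorUnitary.2

lemma coords_dot (z w : n → ℝ) : coords hH z ⬝ᵥ coords hH w = z ⬝ᵥ w :=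
  unitary_dot (star_unitary_mem hH) z w

lemma coords_mulVec (z : n → ℝ) :
    coords hH (H *ᵥ z) = fun j => hH.eigenvalues j * coords hH z j := by
  unfold coords
  rw [Matrix.mulVec_mulVec]
  have key : star (hH.eigenvectorUnitary : Matrix n n ℝ) * H =
      Matrix.diagonal hH.eigenvalues * star (hH.eigenvectorUnitary : Matrix n n ℝ) := by
    have hUU : (hH.eigenvectorUnitary : Matrix n n ℝ) *
        star (hH.eigenvectorUnitary : Matrix n n ℝ) = 1 :=
      (Matrix.mem_unitaryGroup_iff).mp hH.eigenvectorUnitary.2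
    have hdiag : star (hH.eigenvectorUnitary : Matrix n n ℝ) * H *
        (hH.eigenvectorUnitary : Matrix n n ℝ) = Matrix.diagonal (RCLike.ofReal ∘ hH.eigenvalues) := by
      have := hH.conjStarAlgAut_star_eigenvectorUnitary
      simpa using this
    calc star (hH.eigenvectorUnitary : Matrix n n ℝ) * H
        = star (hH.eigenvectorUnitary : Matrix n n ℝ) * H *
          ((hH.eigenvectorUnitary : Matrix n n ℝ) *
            star (hH.eigenvectorUnitary : Matrix n n ℝ)) := by rw [hUU, mul_one]
      _ = (star (hH.eigenvectorUnitary : Matrix n n ℝ) * H *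
            (hH.eigenvectorUnitary : Matrix n n ℝ)) *
          star (hH.eigenvectorUnitary : Matrix n n ℝ) := by
            rw [mul_assoc, mul_assoc, mul_assoc]
      _ = Matrix.diagonal hH.eigenvalues * star (hH.eigenvectorUnitary : Matrix n n ℝ) := by
            rw [hdiag]
            simp [RCLike.ofReal_real_eq_id]
  rw [key, ← Matrix.mulVec_mulVec]
  ext j
  rw [Matrix.mulVec_diagonal]

lemma quad_eq (z : n → ℝ) :
    z ⬝ᵥ (H *ᵥ z) = ∑ j, hH.eigenvalues j * (coords hH z j) ^ 2 := by
  rw [← coords_dot hH z (H *ᵥ z), coords_mulVec]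
  unfold dotProduct
  exact Finset.sum_congr rfl fun j _ => by ring

lemma dot_self_eq (z : n → ℝ) : z ⬝ᵥ z = ∑ j, (coords hH z j) ^ 2 := by
  rw [← coords_dot hH z z]
  unfold dotProduct
  exact Finset.sum_congr rfl fun j _ => by ring

lemma rayleigh_le {c : ℝ} (hc : ∀ j, hH.eigenvalues j ≤ c) (z : n → ℝ) :
    z ⬝ᵥ (H *ᵥ z) ≤ c * (z ⬝ᵥ z) := by
  rw [quad_eq hH, dot_self_eq hH, Finset.mul_sum]
  exact Finset.sum_le_sum fun j _ => mul_le_mul_of_nonneg_right (hc j) (sq_nonneg _)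

lemma rayleigh_abs {c : ℝ} (hc : ∀ j, |hH.eigenvalues j| ≤ c) (z : n → ℝ) :
    |z ⬝ᵥ (H *ᵥ z)| ≤ c * (z ⬝ᵥ z) := by
  rw [quad_eq hH, dot_self_eq hH, Finset.mul_sum]
  refine (Finset.abs_sum_le_sum_abs _ _).trans (Finset.sum_le_sum fun j _ => ?_)
  rw [abs_mul, abs_of_nonneg (sq_nonneg (coords hH z j))]
  exact mul_le_mul_of_nonneg_right (hc j) (sq_nonneg _)

lemma basis_dot (j : n) :
    ⇑(hH.eigenvectorBasis j) ⬝ᵥ ⇑(hH.eigenvectorBasis j) = 1 := by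
  rw [← hH.eigenvectorUnitary_mulVec j, unitary_dot hH.eigenvectorUnitary.2]
  simp [dotProduct, Pi.single_apply]

lemma abs_quad_le (A : Matrix n n ℝ) (hA0 : ∀ i j, 0 ≤ A i j) (z : n → ℝ) :
    |z ⬝ᵥ (A *ᵥ z)| ≤ (fun i => |z i|) ⬝ᵥ (A *ᵥ fun i => |z i|) := by
  unfold dotProduct Matrix.mulVec dotProduct
  refine (Finset.abs_sum_le_sum_abs _ _).trans (Finset.sum_le_sum fun i _ => ?_)
  rw [abs_mul]
  refine mul_le_mul_of_nonneg_left ?_ (abs_nonneg _)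
  refine (Finset.abs_sum_le_sum_abs _ _).trans (Finset.sum_le_sum fun j _ => ?_)
  rw [abs_mul, abs_of_nonneg (hA0 i j)]

lemma mulVec_apply' (M : Matrix n n ℝ) (z : n → ℝ) (i : n) :
    (M *ᵥ z) i = ∑ j, M i j * z j := rfl

lemma dot_apply' (z w : n → ℝ) : z ⬝ᵥ w = ∑ j, z j * w j := rfl

lemma sum_split (v : n) (f : n → ℝ) :
    ∑ u, f u = f v + ∑ u : {u // u ≠ v}, f ↑u := by
  rw [← Finset.add_sum_erase _ f (Finset.mem_univ v)]
  congr 1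
  exact (Finset.sum_subtype (Finset.univ.erase v) (by simp) f)

section Graph

variable {V : Type*} [Fintype V] [DecidableEq V] (G : SimpleGraph V) [DecidableRel G.Adj]
  (v : V)

/-- indicator vector of the neighborhood of `v`, on the vertex set of `G - v`. -/
def avec : {u // u ≠ v} → ℝ := fun u => if G.Adj v ↑u then 1 else 0

lemma avec_nonneg (u : {u // u ≠ v}) : 0 ≤ avec G v u := by
  unfold avec; split <;> norm_num

lemma adjMatrix_nonneg (i j : V) : 0 ≤ G.adjMatrix ℝ i j := by
  rw [SimpleGraph.adjMatrix_apply]; split <;> norm_num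

lemma mulVec_at_v (z : V → ℝ) :
    (G.adjMatrix ℝ *ᵥ z) v = avec G v ⬝ᵥ (fun u : {u // u ≠ v} => z ↑u) := by
  rw [mulVec_apply', dot_apply', sum_split v (fun w => G.adjMatrix ℝ v w * z w)]
  simp only [SimpleGraph.adjMatrix_apply, SimpleGraph.irrefl, if_false, zero_mul, zero_add]
  rfl

lemma deleteVertex_adjMatrix (u w : {u // u ≠ v}) :
    (deleteVertex G v).adjMatrix ℝ u w = G.adjMatrix ℝ ↑u ↑w := by
  rw [SimpleGraph.adjMatrix_apply, SimpleGraph.adjMatrix_apply]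
  exact if_congr (by simp) rfl rfl

lemma mulVec_at_ne (z : V → ℝ) (u : {u // u ≠ v}) :
    (G.adjMatrix ℝ *ᵥ z) ↑u
      = ((deleteVertex G v).adjMatrix ℝ *ᵥ (fun w : {u // u ≠ v} => z ↑w)) u
        + avec G v u * z v := by
  rw [mulVec_apply', sum_split v (fun w => G.adjMatrix ℝ ↑u w * z w)]
  have h1 : G.adjMatrix ℝ ↑u v = avec G v u := by
    rw [SimpleGraph.adjMatrix_apply]
    exact if_congr (SimpleGraph.adj_comm _ _ _) rfl rfl
  have h2 : ((deleteVertex G v).adjMatrix ℝ *ᵥ (fun w : {u // u ≠ v} => z ↑w)) u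
      = ∑ w : {u // u ≠ v}, G.adjMatrix ℝ ↑u ↑w * z ↑w := by
    rw [mulVec_apply']
    exact Finset.sum_congr rfl fun w _ => by rw [deleteVertex_adjMatrix]
  rw [h1, h2, add_comm]

lemma avec_sum : ∑ u : {u // u ≠ v}, avec G v u = (G.degree v : ℝ) := by
  have h1 := sum_split v (fun u => if G.Adj v u then (1:ℝ) else 0)
  simp only [SimpleGraph.irrefl, if_false, zero_add] at h1
  have h2 : ∑ u : {u // u ≠ v}, avec G v u
      = ∑ u : V, (if G.Adj v u then (1:ℝ) else 0) := h1.symm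
  rw [h2, Finset.sum_boole, ← SimpleGraph.neighborFinset_eq_filter,
    SimpleGraph.card_neighborFinset_eq_degree]

lemma avec_dot_avec : avec G v ⬝ᵥ avec G v = (G.degree v : ℝ) := by
  have h1 : ∀ u : {u // u ≠ v}, avec G v u * avec G v u = avec G v u := by
    intro u; unfold avec; split <;> norm_num
  rw [dot_apply', Finset.sum_congr rfl fun u _ => h1 u]
  exact avec_sum G v

lemma BmulVec_avec_le (u : {u // u ≠ v}) (h : G.Adj v ↑u) :
    ((deleteVertex G v).adjMatrix ℝ *ᵥ avec G v) u ≤ (G.degree v : ℝ) - 1 := by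
  have hstep : ((deleteVertex G v).adjMatrix ℝ *ᵥ avec G v) u
      ≤ ∑ w : {u // u ≠ v}, (if G.Adj v ↑w ∧ (↑w : V) ≠ ↑u then (1:ℝ) else 0) := by
    rw [mulVec_apply']
    refine Finset.sum_le_sum fun w _ => ?_
    rw [deleteVertex_adjMatrix, SimpleGraph.adjMatrix_apply]
    unfold avec
    by_cases h1 : G.Adj (↑u : V) ↑w
    · by_cases h2 : G.Adj v ↑w
      · have h3 : (↑w : V) ≠ ↑u := (G.ne_of_adj h1).symm
        simp [h1, h2, h3]
      · simp [h2]
    · simp only [h1, if_false, zero_mul]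
      split <;> norm_num
  refine hstep.trans ?_
  have h4 : ∑ w : {u // u ≠ v}, (if G.Adj v ↑w ∧ (↑w : V) ≠ ↑u then (1:ℝ) else 0)
      = ∑ w : V, (if G.Adj v w ∧ w ≠ ↑u then (1:ℝ) else 0) := by
    have h5 := sum_split v (fun w => if G.Adj v w ∧ w ≠ ↑u then (1:ℝ) else 0)
    simp only [SimpleGraph.irrefl, false_and, if_false, zero_add] at h5
    exact h5.symm
  rw [h4, Finset.sum_boole]
  have h6 : Finset.univ.filter (fun w => G.Adj v w ∧ w ≠ ↑u)
      = (G.neighborFinset v).erase ↑u := by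
    ext w
    simp only [Finset.mem_filter, Finset.mem_univ, true_and, Finset.mem_erase,
      SimpleGraph.mem_neighborFinset]
    tauto
  rw [h6]
  have hmem : (↑u : V) ∈ G.neighborFinset v := (SimpleGraph.mem_neighborFinset G v ↑u).mpr h
  have hd1 : 1 ≤ G.degree v := by
    rw [← SimpleGraph.card_neighborFinset_eq_degree]
    exact Finset.card_pos.mpr ⟨↑u, hmem⟩
  rw [Finset.card_erase_of_mem hmem, SimpleGraph.card_neighborFinset_eq_degree,
    Nat.cast_sub hd1]
  norm_num

end Graph

end SpecDelAux

open SpecDelAux in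
/-- **Sun–Das / Guo–Wang–Li.** For a finite simple graph `G` and a non-isolated
vertex `v`, `λ(G) ≤ sqrt(λ(G - v)^2 + 2 d(v) - 1)`. -/
theorem spectral_radius_delete_vertex {V : Type*} [Fintype V] [DecidableEq V]
    (G : SimpleGraph V) [DecidableRel G.Adj] (v : V) (hv : 1 ≤ G.degree v) :
    specRad G ≤ Real.sqrt (specRad (deleteVertex G v) ^ 2 + 2 * (G.degree v : ℝ) - 1) := by
  classical
  set dR : ℝ := (G.degree v : ℝ) with hdR
  have hd1 : (1:ℝ) ≤ dR := by rw [hdR]; exact_mod_cast hv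
  obtain ⟨u0, hu0⟩ : ∃ u0, u0 ∈ G.neighborFinset v := by
    apply Finset.Nonempty.exists_mem
    apply Finset.card_pos.mp
    rw [SimpleGraph.card_neighborFinset_eq_degree]
    omega
  have hadj0 : G.Adj v u0 := (SimpleGraph.mem_neighborFinset G v u0).mp hu0
  haveI hmne : Nonempty {u // u ≠ v} := ⟨⟨u0, (G.ne_of_adj hadj0).symm⟩⟩
  haveI : Nonempty V := ⟨v⟩
  set ρ := specRad (deleteVertex G v) with hρdef
  have hB := adjHerm (deleteVertex G v)
  have hρrfl : ρ = ⨆ j, |hB.eigenvalues j| := hρdef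
  have hρabs : ∀ j, |hB.eigenvalues j| ≤ ρ := by
    intro j
    rw [hρrfl]
    exact le_ciSup (Set.finite_range fun i => |hB.eigenvalues i|).bddAbove j
  have hρ0 : 0 ≤ ρ := le_trans (abs_nonneg _) (hρabs (Classical.arbitrary _))
  have hA := adjHerm G
  obtain ⟨j0, -, hj0⟩ := Finset.exists_max_image Finset.univ hA.eigenvalues
    ⟨v, Finset.mem_univ v⟩
  set lam := hA.eigenvalues j0 with hlamdef
  have hmax : ∀ i, hA.eigenvalues i ≤ lam := fun i => hj0 i (Finset.mem_univ i)
  have habs : ∀ i, |hA.eigenvalues i| ≤ lam := by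
    intro i
    have h1 := hA.mulVec_eigenvectorBasis i
    have h2 := basis_dot hA i
    have h3 : hA.eigenvalues i
        = ⇑(hA.eigenvectorBasis i) ⬝ᵥ (G.adjMatrix ℝ *ᵥ ⇑(hA.eigenvectorBasis i)) := by
      rw [h1, dotProduct_smul, h2]
      simp
    have h4 := abs_quad_le (G.adjMatrix ℝ) (adjMatrix_nonneg G) ⇑(hA.eigenvectorBasis i)
    have h5 := rayleigh_le hA hmax (fun t => |(hA.eigenvectorBasis i) t|)
    have h6 : (fun t => |(hA.eigenvectorBasis i) t|) ⬝ᵥ (fun t => |(hA.eigenvectorBasis i) t|)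
        = 1 := by
      rw [dot_apply']
      rw [dot_apply'] at h2
      rw [← h2]
      exact Finset.sum_congr rfl fun t _ => abs_mul_abs_self _
    rw [h3]
    calc |⇑(hA.eigenvectorBasis i) ⬝ᵥ (G.adjMatrix ℝ *ᵥ ⇑(hA.eigenvectorBasis i))|
        ≤ (fun t => |(hA.eigenvectorBasis i) t|) ⬝ᵥ
            (G.adjMatrix ℝ *ᵥ fun t => |(hA.eigenvectorBasis i) t|) := h4
      _ ≤ lam * ((fun t => |(hA.eigenvectorBasis i) t|) ⬝ᵥ
            (fun t => |(hA.eigenvectorBasis i) t|)) := h5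
      _ = lam := by rw [h6, mul_one]
  have hspec : specRad G = lam := by
    have hrfl : specRad G = ⨆ i, |hA.eigenvalues i| := rfl
    rw [hrfl]
    refine le_antisymm (ciSup_le habs) ?_
    exact (le_abs_self lam).trans
      (le_ciSup (Set.finite_range fun i => |hA.eigenvalues i|).bddAbove j0)
  set x0 : V → ℝ := ⇑(hA.eigenvectorBasis j0) with hx0def
  have hx0 : G.adjMatrix ℝ *ᵥ x0 = lam • x0 := hA.mulVec_eigenvectorBasis j0
  have hx0n : x0 ⬝ᵥ x0 = 1 := basis_dot hA j0
  rcases le_or_gt lam ρ with hcase | hcase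
  · rw [hspec]
    calc lam ≤ ρ := hcase
      _ = Real.sqrt (ρ^2) := (Real.sqrt_sq hρ0).symm
      _ ≤ Real.sqrt (ρ^2 + 2*dR - 1) := Real.sqrt_le_sqrt (by linarith)
  · have hgap : ∀ j, hB.eigenvalues j < lam := fun j =>
      lt_of_le_of_lt ((le_abs_self _).trans (hρabs j)) hcase
    have hlam0 : 0 < lam := lt_of_le_of_lt hρ0 hcase
    suffices hfin : lam^2 ≤ ρ^2 + 2*dR - 1 by
      rw [hspec]
      exact (Real.le_sqrt hlam0.le (by nlinarith [sq_nonneg ρ])).mpr hfin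
    by_cases hxv : x0 v = 0
    · exfalso
      set y : {u // u ≠ v} → ℝ := fun u => x0 ↑u with hydef
      have hyu : ∀ u : {u // u ≠ v}, y u = x0 ↑u := fun u => rfl
      have hBy : ∀ u, ((deleteVertex G v).adjMatrix ℝ *ᵥ y) u = lam * y u := by
        intro u
        have h7 := mulVec_at_ne G v x0 u
        rw [hx0] at h7
        have h8 : (lam • x0) ↑u = lam * y u := rfl
        rw [h8, hxv, mul_zero, add_zero] at h7
        exact h7.symm
      have hyy : y ⬝ᵥ y = 1 := by
        rw [dot_apply']
        have h8 := sum_split v (fun u => x0 u * x0 u)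
        rw [hxv, zero_mul, zero_add] at h8
        rw [dot_apply'] at hx0n
        rw [← h8]
        exact hx0n
      have h9 : y ⬝ᵥ ((deleteVertex G v).adjMatrix ℝ *ᵥ y) = lam := by
        rw [dot_apply']
        calc ∑ u, y u * ((deleteVertex G v).adjMatrix ℝ *ᵥ y) u
            = ∑ u, lam * (y u * y u) := Finset.sum_congr rfl fun u _ => by
              rw [hBy u]; ring
          _ = lam * (y ⬝ᵥ y) := by rw [dot_apply', Finset.mul_sum]
          _ = lam := by rw [hyy, mul_one]
      have h10 := rayleigh_abs hB hρabs y
      rw [h9, hyy, mul_one] at h10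
      have h11 := le_trans (le_abs_self lam) h10
      linarith
    · set x : V → ℝ := (x0 v)⁻¹ • x0 with hxdef
      have hx : G.adjMatrix ℝ *ᵥ x = lam • x := by
        rw [hxdef, Matrix.mulVec_smul, hx0, smul_comm]
      have hxv1 : x v = 1 := by
        rw [hxdef]
        simp [inv_mul_cancel₀ hxv]
      set y : {u // u ≠ v} → ℝ := fun u => x ↑u with hydef
      have hyu : ∀ u : {u // u ≠ v}, y u = x ↑u := fun u => rfl
      set aV := avec G v with haV
      have hya : (deleteVertex G v).adjMatrix ℝ *ᵥ y = lam • y - aV := by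
        funext u
        have h7 := mulVec_at_ne G v x u
        rw [hx] at h7
        have h8 : (lam • x) ↑u = lam * y u := rfl
        rw [h8, hxv1, mul_one] at h7
        have h9 : (lam • y - aV) u = lam * y u - aV u := rfl
        rw [h9]
        linarith
      have hlam_eq : aV ⬝ᵥ y = lam := by
        have h7 := mulVec_at_v G v x
        rw [hx] at h7
        have h8 : (lam • x) v = lam * x v := rfl
        rw [h8, hxv1, mul_one] at h7
        exact h7.symm
      have hrel : ∀ j, coords hB aV j = (lam - hB.eigenvalues j) * coords hB y j := by
        intro j
        have h8 := congrArg (coords hB) hya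
        rw [coords_mulVec hB y] at h8
        have h9 : coords hB (lam • y - aV) = fun j => lam * coords hB y j - coords hB aV j := by
          unfold coords
          rw [Matrix.mulVec_sub, Matrix.mulVec_smul]
          rfl
        rw [h9] at h8
        have h10 : hB.eigenvalues j * coords hB y j
            = lam * coords hB y j - coords hB aV j := congrFun h8 j
        linear_combination h10
      have hd_dot : aV ⬝ᵥ aV = dR := by
        rw [haV, hdR]; exact avec_dot_avec G v
      set E2 := aV ⬝ᵥ ((deleteVertex G v).adjMatrix ℝ *ᵥ aV) with hE2def
      have hI1 : lam = ∑ j, (lam - hB.eigenvalues j) * (coords hB y j)^2 := by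
        have h' : aV ⬝ᵥ y = ∑ j, (lam - hB.eigenvalues j) * (coords hB y j)^2 := by
          rw [← coords_dot hB aV y, dot_apply']
          refine Finset.sum_congr rfl fun j _ => ?_
          rw [hrel j]; ring
        exact hlam_eq.symm.trans h'
      have hI2 : dR = ∑ j, ((lam - hB.eigenvalues j) * coords hB y j)^2 := by
        have h' : aV ⬝ᵥ aV = ∑ j, ((lam - hB.eigenvalues j) * coords hB y j)^2 := by
          rw [← coords_dot hB aV aV, dot_apply']
          refine Finset.sum_congr rfl fun j _ => ?_
          rw [hrel j]; ring
        exact hd_dot.symm.trans h'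
      have hI3 : E2 = ∑ j, hB.eigenvalues j * ((lam - hB.eigenvalues j) * coords hB y j)^2 := by
        have h' : aV ⬝ᵥ ((deleteVertex G v).adjMatrix ℝ *ᵥ aV)
            = ∑ j, hB.eigenvalues j * (coords hB aV j)^2 := by
          rw [← coords_dot hB aV ((deleteVertex G v).adjMatrix ℝ *ᵥ aV),
            coords_mulVec hB aV, dot_apply']
          exact Finset.sum_congr rfl fun j _ => by ring
        rw [hE2def, h']
        exact Finset.sum_congr rfl fun j _ => by rw [hrel j]
      have hkey : lam*dR + E2 + ρ^2*lam - lam^3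
          = ∑ j, (coords hB y j)^2 * (lam - hB.eigenvalues j)
              * (ρ^2 - (hB.eigenvalues j)^2) := by
        calc lam*dR + E2 + ρ^2*lam - lam^3
            = lam*(∑ j, ((lam - hB.eigenvalues j) * coords hB y j)^2)
              + (∑ j, hB.eigenvalues j * ((lam - hB.eigenvalues j) * coords hB y j)^2)
              + ρ^2*(∑ j, (lam - hB.eigenvalues j) * (coords hB y j)^2)
              - lam^2*(∑ j, (lam - hB.eigenvalues j) * (coords hB y j)^2) := by
                rw [← hI1, ← hI2, ← hI3]; ring
          _ = ∑ j, (lam*((lam - hB.eigenvalues j) * coords hB y j)^2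
              + hB.eigenvalues j*((lam - hB.eigenvalues j) * coords hB y j)^2
              + ρ^2*((lam - hB.eigenvalues j) * (coords hB y j)^2)
              - lam^2*((lam - hB.eigenvalues j) * (coords hB y j)^2)) := by
                rw [Finset.mul_sum, Finset.mul_sum, Finset.mul_sum,
                  ← Finset.sum_add_distrib, ← Finset.sum_add_distrib, ← Finset.sum_sub_distrib]
          _ = ∑ j, (coords hB y j)^2 * (lam - hB.eigenvalues j)
              * (ρ^2 - (hB.eigenvalues j)^2) :=
              Finset.sum_congr rfl fun j _ => by ring
      have hsumnn : 0 ≤ ∑ j, (coords hB y j)^2 * (lam - hB.eigenvalues j)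
          * (ρ^2 - (hB.eigenvalues j)^2) := by
        refine Finset.sum_nonneg fun j _ => ?_
        have h11 : 0 ≤ ρ^2 - (hB.eigenvalues j)^2 := by
          have h12 := hρabs j
          nlinarith [abs_nonneg (hB.eigenvalues j), sq_abs (hB.eigenvalues j)]
        have h13 : 0 ≤ lam - hB.eigenvalues j := sub_nonneg.mpr (hgap j).le
        exact mul_nonneg (mul_nonneg (sq_nonneg _) h13) h11
      have hE2le : E2 ≤ (dR - 1) * lam := by
        rcases le_or_gt dR lam with hdlam | hdlam
        · have h14 : E2 ≤ dR * (dR - 1) := by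
            rw [hE2def, dot_apply']
            have h15 : ∀ u : {u // u ≠ v},
                aV u * ((deleteVertex G v).adjMatrix ℝ *ᵥ aV) u ≤ aV u * (dR - 1) := by
              intro u
              by_cases hu : G.Adj v ↑u
              · refine mul_le_mul_of_nonneg_left ?_ (by rw [haV]; exact avec_nonneg G v u)
                rw [haV, hdR]
                exact BmulVec_avec_le G v u hu
              · have h16 : aV u = 0 := by rw [haV]; unfold avec; rw [if_neg hu]
                rw [h16, zero_mul, zero_mul]
            refine (Finset.sum_le_sum fun u _ => h15 u).trans ?_
            rw [← Finset.sum_mul]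
            have h17 : ∑ u : {u // u ≠ v}, aV u = dR := by
              rw [haV, hdR]; exact avec_sum G v
            rw [h17]
          have h18 : dR * (dR - 1) ≤ (dR - 1) * lam := by nlinarith
          linarith
        · set z : V → ℝ := fun u => if u = v ∨ G.Adj v u then 1 else 0 with hzdef
          have hzv : z v = 1 := by rw [hzdef]; simp
          have hzm : (fun u : {u // u ≠ v} => z ↑u) = aV := by
            funext u
            rw [hzdef, haV]
            show (if (↑u : V) = v ∨ G.Adj v ↑u then (1:ℝ) else 0) = avec G v u
            unfold avec
            exact if_congr (or_iff_right u.2) rfl rfl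
          have hray := rayleigh_le hA hmax z
          have hzAz : z ⬝ᵥ (G.adjMatrix ℝ *ᵥ z) = 2*dR + E2 := by
            rw [dot_apply', sum_split v (fun u => z u * (G.adjMatrix ℝ *ᵥ z) u)]
            have hterm_v : z v * (G.adjMatrix ℝ *ᵥ z) v = dR := by
              rw [hzv, one_mul, mulVec_at_v G v z, hzm, hd_dot]
            have hterm_u : ∀ u : {u // u ≠ v}, z ↑u * (G.adjMatrix ℝ *ᵥ z) ↑u
                = aV u * ((deleteVertex G v).adjMatrix ℝ *ᵥ aV) u + aV u * aV u := by
              intro u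
              rw [mulVec_at_ne G v z u, hzm, hzv, mul_one, congrFun hzm u, ← haV]
              ring
            rw [hterm_v, Finset.sum_congr rfl fun u _ => hterm_u u, Finset.sum_add_distrib]
            have h19 : ∑ u : {u // u ≠ v},
                aV u * ((deleteVertex G v).adjMatrix ℝ *ᵥ aV) u = E2 := by
              rw [hE2def, dot_apply']
            have h20 : ∑ u : {u // u ≠ v}, aV u * aV u = dR := by
              rw [← dot_apply', hd_dot]
            rw [h19, h20]
            ring
          have hzz : z ⬝ᵥ z = 1 + dR := by
            rw [dot_apply', sum_split v (fun u => z u * z u), hzv, one_mul]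
            have h21 : ∀ u : {u // u ≠ v}, z ↑u * z ↑u = aV u * aV u := fun u => by
              rw [congrFun hzm u]
            rw [Finset.sum_congr rfl fun u _ => h21 u, ← dot_apply', hd_dot]
          rw [hzAz, hzz] at hray
          nlinarith
      have hchain : lam^3 ≤ lam*dR + E2 + ρ^2*lam := by linarith
      have h16 : lam * lam^2 ≤ lam * (ρ^2 + 2*dR - 1) := by
        calc lam * lam^2 = lam^3 := by ring
          _ ≤ lam*dR + E2 + ρ^2*lam := hchain
          _ ≤ lam*dR + (dR - 1)*lam + ρ^2*lam := by linarith
          _ = lam * (ρ^2 + 2*dR - 1) := by ring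
      exact le_of_mul_le_mul_left h16 hlam0
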